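/- Let X_S be a non-sofic S-gap shift. For every F ∈ Aut(X_S) there exists i ∈ ℤ such that F(X_{S,ℓ}) ⊆ σ^i(X_{S,ℓ}) and F(X_{S,→}) ⊆ σ^i(X_{S,→}), where X_{S,ℓ} = {x ∈ X_S : x[0,∞] = 01^∞} and X_{S,→} = {x ∈ X_S : x[−∞,0] = ^∞10}. -/

import Mathlib

/-- The shift map on bi-infinite sequences. -/
def shiftMap {A : Type*} (x : ℤ → A) : ℤ → A := fun i => x (i + 1)

/-- The `k`-fold shift map (`σ^k`). -/
def shiftPow {A : Type*} (k : ℤ) (x : ℤ → A) : ℤ → A := fun i => x (i + k)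

/-- A subshift: a closed shift-invariant subset of `A^ℤ`. -/
def IsSubshift {A : Type*} [TopologicalSpace A] (X : Set (ℤ → A)) : Prop :=
  IsClosed X ∧ shiftMap '' X = X

/-- The word `w` occurs in `x` at position `i`. -/
def occursAt {A : Type*} (x : ℤ → A) (w : List A) (i : ℤ) : Prop :=
  ∀ (k : ℕ) (hk : k < w.length), x (i + k) = w.get ⟨k, hk⟩

/-- `w` belongs to the language of `X`. -/
def InLang {A : Type*} (X : Set (ℤ → A)) (w : List A) : Prop :=
  ∃ x ∈ X, occursAt x w 0

/-- The set of contexts of a word with respect to `X`. -/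
def contexts {A : Type*} (X : Set (ℤ → A)) (w : List A) : Set (List A × List A) :=
  {p | InLang X (p.1 ++ w ++ p.2)}

/-- `w` is a synchronizing word of `X`. -/
def IsSynchronizing {A : Type*} (X : Set (ℤ → A)) (w : List A) : Prop :=
  InLang X w ∧ ∀ u v : List A, InLang X (u ++ w) → InLang X (w ++ v) → InLang X (u ++ w ++ v)

/-- `X` is a transitive subshift. -/
def IsTransitiveSubshift {A : Type*} (X : Set (ℤ → A)) : Prop :=
  ∀ u v : List A, InLang X u → InLang X v → ∃ w : List A, InLang X (u ++ w ++ v)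

/-- A reversible cellular automaton (automorphism) of the subshift `X`. -/
def IsAutomorphism {A : Type*} [TopologicalSpace A] (X : Set (ℤ → A))
    (F : (ℤ → A) → (ℤ → A)) : Prop :=
  Set.MapsTo F X X ∧ ContinuousOn F X ∧ (∀ x ∈ X, F (shiftMap x) = shiftMap (F x)) ∧
  ∃ G : (ℤ → A) → (ℤ → A), Set.MapsTo G X X ∧ ContinuousOn G X ∧
    (∀ x ∈ X, G (shiftMap x) = shiftMap (G x)) ∧
    (∀ x ∈ X, G (F x) = x) ∧ (∀ x ∈ X, F (G x) = x)

/-- `F` is given on `X` by a local rule of radius `r`. -/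
def HasRadius {A : Type*} (X : Set (ℤ → A)) (F : (ℤ → A) → (ℤ → A)) (r : ℕ) : Prop :=
  ∃ f : (Fin (2 * r + 1) → A) → A, ∀ x ∈ X, ∀ i : ℤ, F x i = f (fun k => x (i - r + k))

/-- `x` is an equicontinuity point of `(X, F)` (combinatorial formulation). -/
def IsEquicontinuityPoint {A : Type*} (X : Set (ℤ → A)) (F : (ℤ → A) → (ℤ → A))
    (x : ℤ → A) : Prop :=
  x ∈ X ∧ ∀ N : ℕ, ∃ M : ℕ, ∀ y ∈ X, (∀ j : ℤ, |j| ≤ (M : ℤ) → y j = x j) →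
    ∀ t : ℕ, ∀ j : ℤ, |j| ≤ (N : ℤ) → F^[t] y j = F^[t] x j

/-- The generating word `0 1^n` of an `S`-gap shift. -/
def genWord (n : ℕ) : List Bool := false :: List.replicate n true

/-- `w` is a concatenation of generating words `0 1^n`, `n ∈ S`. -/
def InGenStar (S : Set ℕ) (w : List Bool) : Prop :=
  ∃ l : List ℕ, (∀ n ∈ l, n ∈ S) ∧ w = (l.map genWord).flatten

/-- The subword `x[i, i+n-1]` of a configuration. -/
def wordAt {A : Type*} (x : ℤ → A) (i : ℤ) (n : ℕ) : List A :=
  (List.range n).map fun k => x (i + k)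

/-- The `S`-gap shift: configurations all of whose finite subwords occur in some
concatenation of the generating words. -/
def SGap (S : Set ℕ) : Set (ℤ → Bool) :=
  {x | ∀ (i : ℤ) (n : ℕ), ∃ w : List Bool, InGenStar S w ∧ (wordAt x i n) <:+: w}

/-- The characteristic sequence of `S` is eventually periodic. -/
def EventuallyPeriodic (S : Set ℕ) : Prop :=
  ∃ p > 0, ∃ N : ℕ, ∀ n ≥ N, (n ∈ S ↔ n + p ∈ S)

/-- `X_{S,ℓ}`: points whose right tail from `0` is `01^∞`. -/
def SGapLeft (S : Set ℕ) : Set (ℤ → Bool) :=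
  {x | x ∈ SGap S ∧ x 0 = false ∧ ∀ i : ℤ, 0 < i → x i = true}

/-- `X_{S,→}`: points whose left tail up to `0` is `^∞10`. -/
def SGapRight (S : Set ℕ) : Set (ℤ → Bool) :=
  {x | x ∈ SGap S ∧ x 0 = false ∧ ∀ i : ℤ, i < 0 → x i = true}

section Lists
variable {S : Set ℕ}

lemma join_genWords_head (l : List ℕ) :
    (l.map genWord).flatten = [] ∨ ∃ t, (l.map genWord).flatten = false :: t := by
  cases l with
  | nil => left; rfl
  | cons n l' => right; exact ⟨List.replicate n true ++ (l'.map genWord).flatten, rfl⟩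

lemma strip_trues {k : ℕ} {rest Q t : List Bool}
    (h : List.replicate k true ++ rest = Q ++ false :: t) :
    ∃ Q', Q = List.replicate k true ++ Q' ∧ rest = Q' ++ false :: t := by
  induction k generalizing Q with
  | zero => exact ⟨Q, by simpa using rfl, by simpa using h⟩
  | succ k ih =>
    cases Q with
    | nil => simp [List.replicate_succ] at h
    | cons b Q'' =>
      rw [List.replicate_succ] at h
      simp only [List.cons_append] at h
      injection h with h1 h2
      obtain ⟨Q', hQ, hr⟩ := ih h2
      exact ⟨Q', by simp [List.replicate_succ, ← h1, hQ], hr⟩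

/-- Every `false` in a concatenation of generating words starts a block. -/
lemma block_align {l : List ℕ} {P t : List Bool}
    (h : (l.map genWord).flatten = P ++ false :: t) :
    ∃ l₁ l₂, l = l₁ ++ l₂ ∧ P = (l₁.map genWord).flatten ∧
      false :: t = (l₂.map genWord).flatten := by
  induction l generalizing P with
  | nil => simp at h
  | cons n l' ih =>
    cases P with
    | nil => exact ⟨[], n :: l', rfl, rfl, by simpa using h.symm⟩
    | cons b P' =>
      simp only [List.map_cons, List.flatten, genWord, List.cons_append] at h
      injection h with h1 h2
      rw [List.append_eq] at h2
      obtain ⟨Q', hQ, hr⟩ := strip_trues h2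
      obtain ⟨l₁', l₂, hl, hP, ht⟩ := ih (show _ = _ ++ _ :: _ from hr)
      refine ⟨n :: l₁', l₂, by simp [hl], ?_, ht⟩
      simp [genWord, ← h1, hQ, hP]

end Lists

section Lists2
variable {S : Set ℕ}

lemma rep_compare {n g : ℕ} {A B : List Bool}
    (hA : A = [] ∨ ∃ t', A = false :: t')
    (h : List.replicate n true ++ A = List.replicate g true ++ false :: B) : n = g := by
  induction n generalizing g with
  | zero =>
    cases g with
    | zero => rfl
    | succ k =>
      rw [List.replicate_succ] at h
      simp only [List.replicate_zero, List.nil_append] at h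
      rcases hA with hA | ⟨t', hA⟩ <;> rw [hA] at h <;> simp at h
  | succ n ih =>
    cases g with
    | zero =>
      rw [List.replicate_succ] at h
      simp at h
    | succ k =>
      rw [List.replicate_succ, List.replicate_succ] at h
      simp only [List.cons_append] at h
      injection h with _ h2
      exact congrArg Nat.succ (ih h2)

lemma mem_S_of_gap_infix {J : List Bool} {g : ℕ} {c : List Bool}
    (hJ : InGenStar S J)
    (hocc : (false :: (List.replicate g true ++ false :: c)) <:+: J) : g ∈ S := by
  obtain ⟨l, hl, rfl⟩ := hJ
  obtain ⟨s, t', hst⟩ := hocc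
  have h : (l.map genWord).flatten = s ++ false :: (List.replicate g true ++ false :: (c ++ t')) := by
    rw [← hst]; simp
  obtain ⟨l₁, l₂, hsplit, hP, ht⟩ := block_align h
  cases l₂ with
  | nil => simp at ht
  | cons n l₂' =>
    have hgen : genWord n ++ (l₂'.map genWord).flatten
        = false :: (List.replicate g true ++ false :: (c ++ t')) := by
      rw [ht]; simp
    rw [genWord] at hgen
    simp only [List.cons_append] at hgen
    injection hgen with h2 h3
    have hhead := join_genWords_head l₂'
    have : n = g := rep_compare (by
      rcases hhead with h' | ⟨t'', h'⟩
      · exact Or.inl h'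
      · exact Or.inr ⟨t'', h'⟩) h3
    subst this
    exact hl n (by simp [hsplit])

lemma InGenStar.append {a b : List Bool} (ha : InGenStar S a) (hb : InGenStar S b) :
    InGenStar S (a ++ b) := by
  obtain ⟨l₁, h1, rfl⟩ := ha
  obtain ⟨l₂, h2, rfl⟩ := hb
  refine ⟨l₁ ++ l₂, ?_, by simp⟩
  intro n hn
  rcases List.mem_append.1 hn with h | h
  · exact h1 n h
  · exact h2 n h

lemma InGenStar.genWord {n : ℕ} (hn : n ∈ S) : InGenStar S (genWord n) :=
  ⟨[n], by simpa using hn, by simp⟩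

end Lists2

section Words
variable {S : Set ℕ} {A : Type*}

lemma wordAt_eq (x : ℤ → A) (i : ℤ) (n : ℕ) :
    wordAt x i n = (List.range n).map (fun k : ℕ => x (i + (k:ℤ))) := by
  unfold wordAt
  induction n with
  | zero => rfl
  | succ n ih => rw [List.range_succ]; simp_all

lemma wordAt_length (x : ℤ → A) (i : ℤ) (n : ℕ) : (wordAt x i n).length = n := by
  simp [wordAt_eq]

lemma wordAt_append (x : ℤ → A) (i : ℤ) (a b : ℕ) :
    wordAt x i (a + b) = wordAt x i a ++ wordAt x (i + a) b := by
  rw [wordAt_eq, wordAt_eq, wordAt_eq]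
  rw [List.range_add, List.map_append, List.map_map]
  congr 1
  apply List.map_congr_left
  intro k _
  simp only [Function.comp_apply]
  congr 1
  push_cast
  ring

lemma wordAt_congr {x y : ℤ → A} {i : ℤ} {n : ℕ}
    (h : ∀ k : ℕ, k < n → x (i + k) = y (i + k)) : wordAt x i n = wordAt y i n := by
  rw [wordAt_eq, wordAt_eq]
  apply List.map_congr_left
  intro k hk
  exact h k (List.mem_range.1 hk)

lemma wordAt_replicate {x : ℤ → A} {i : ℤ} {n : ℕ} {c : A}
    (h : ∀ k : ℕ, k < n → x (i + k) = c) : wordAt x i n = List.replicate n c := by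
  rw [wordAt_eq]
  apply List.ext_getElem (by simp)
  intro k h1 h2
  simp only [List.getElem_map, List.getElem_range, List.getElem_replicate]
  exact h k (by simpa using h1)

lemma wordAt_one (x : ℤ → A) (i : ℤ) : wordAt x i 1 = [x i] := by
  rw [wordAt_eq]
  show List.map _ [0] = _
  simp

lemma wordAt_infix_mono (x : ℤ → A) {i i' : ℤ} {n n' : ℕ}
    (h1 : i' ≤ i) (h2 : i + n ≤ i' + n') : wordAt x i n <:+: wordAt x i' n' := by
  set a : ℕ := (i - i').toNat with ha
  set b : ℕ := (i' + n' - (i + n)).toNat with hb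
  have hA : (a : ℤ) = i - i' := Int.toNat_of_nonneg (by omega)
  have hB : (b : ℤ) = i' + n' - (i + n) := Int.toNat_of_nonneg (by omega)
  have hn' : n' = a + (n + b) := by omega
  rw [hn', wordAt_append, wordAt_append]
  have h3 : i' + (a : ℤ) = i := by omega
  rw [h3]
  exact ⟨wordAt x i' a, wordAt x (i + n) b, by simp⟩

lemma wordAt_shiftPow (x : ℤ → A) (k i : ℤ) (n : ℕ) :
    wordAt (shiftPow k x) i n = wordAt x (i + k) n := by
  rw [wordAt_eq, wordAt_eq]
  apply List.map_congr_left
  intro m _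
  show x (i + m + k) = x (i + k + m)
  congr 1
  ring

lemma sgap_shiftPow {S : Set ℕ} {x : ℤ → Bool} (hx : x ∈ SGap S) (k : ℤ) :
    shiftPow k x ∈ SGap S := by
  intro i n
  obtain ⟨w, hw, hinf⟩ := hx (i + k) n
  exact ⟨w, hw, by rwa [wordAt_shiftPow]⟩

lemma join_rep_genzero (k : ℕ) :
    ((List.replicate k 0).map genWord).flatten = List.replicate k false := by
  induction k with
  | zero => rfl
  | succ k ih => simp [List.replicate_succ, genWord, ih]

/-- Align a word of the form `0 V 0` occurring in the language with blocks. -/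
lemma exists_block_list {J V : List Bool} (hJ : InGenStar S J)
    (hocc : (false :: (V ++ [false])) <:+: J) :
    ∃ la : List ℕ, (∀ m ∈ la, m ∈ S) ∧ (la.map genWord).flatten = false :: V := by
  obtain ⟨l, hl, rfl⟩ := hJ
  obtain ⟨s, t, hst⟩ := hocc
  have h : (l.map genWord).flatten = s ++ false :: (V ++ false :: t) := by
    rw [← hst]; simp
  obtain ⟨l₁, l₂, hsplit, hP, ht⟩ := block_align h
  have h2 : (l₂.map genWord).flatten = (false :: V) ++ false :: t := by rw [← ht]; simp
  obtain ⟨la, lb, hsplit2, hP2, _⟩ := block_align h2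
  refine ⟨la, fun m hm => hl m (by simp [hsplit, hsplit2, hm]), hP2.symm⟩

/-- Glue on the right: a legal word ending in `0` can be extended by `1^n 0 1^b`. -/
lemma glue_right {J u : List Bool} (hJ : InGenStar S J)
    (hocc : (u ++ [false]) <:+: J) {n : ℕ} (hn : n ∈ S) {b B : ℕ} (hB : B ∈ S) (hbB : b ≤ B) :
    ∃ J', InGenStar S J' ∧
      (u ++ [false] ++ (List.replicate n true ++ false :: List.replicate b true)) <:+: J' := by
  obtain ⟨l, hl, rfl⟩ := hJ
  obtain ⟨s, t, hst⟩ := hocc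
  have h : (l.map genWord).flatten = (s ++ u) ++ false :: t := by rw [← hst]; simp
  obtain ⟨l₁, l₂, hsplit, hP, _⟩ := block_align h
  refine ⟨(l₁.map genWord).flatten ++ genWord n ++ genWord B,
    (InGenStar.append (InGenStar.append ⟨l₁, fun m hm => hl m (by simp [hsplit, hm]), rfl⟩
      (InGenStar.genWord hn)) (InGenStar.genWord hB)), ?_⟩
  refine ⟨s, List.replicate (B - b) true, ?_⟩
  rw [← hP, genWord, genWord]
  have hrep : List.replicate B true = List.replicate b true ++ List.replicate (B - b) true := by
    rw [← List.replicate_add]; congr 1; omega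
  rw [hrep]
  simp

/-- Glue on the left: a legal word beginning with `0` can be preceded by `1^a 0 1^n`. -/
lemma glue_left {J u' : List Bool} (hJ : InGenStar S J)
    (hocc : (false :: u') <:+: J) {n : ℕ} (hn : n ∈ S) {a A : ℕ} (hA : A ∈ S) (haA : a ≤ A) :
    ∃ J', InGenStar S J' ∧
      (List.replicate a true ++ false :: (List.replicate n true ++ false :: u')) <:+: J' := by
  obtain ⟨l, hl, rfl⟩ := hJ
  obtain ⟨s, t, hst⟩ := hocc
  have h : (l.map genWord).flatten = s ++ false :: (u' ++ t) := by rw [← hst]; simp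
  obtain ⟨l₁, l₂, hsplit, hP, ht⟩ := block_align h
  refine ⟨genWord A ++ genWord n ++ (l₂.map genWord).flatten,
    (InGenStar.append (InGenStar.append (InGenStar.genWord hA) (InGenStar.genWord hn))
      ⟨l₂, fun m hm => hl m (by simp [hsplit, hm]), rfl⟩), ?_⟩
  refine ⟨false :: List.replicate (A - a) true, t, ?_⟩
  rw [← ht, genWord, genWord]
  have hrep : List.replicate A true = List.replicate (A - a) true ++ List.replicate a true := by
    rw [← List.replicate_add]; congr 1; omega
  rw [hrep]
  simp only [List.append_assoc, List.cons_append, List.nil_append]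

end Words

section Topo

lemma isClosed_sgap (S : Set ℕ) : IsClosed (SGap S) := by
  rw [← isOpen_compl_iff, isOpen_iff_mem_nhds]
  intro x hx
  simp only [Set.mem_compl_iff, SGap, Set.mem_setOf_eq, not_forall] at hx
  obtain ⟨i, n, hin⟩ := hx
  have hopen : IsOpen (⋂ k ∈ Finset.range n, (fun y : ℤ → Bool => y (i + k)) ⁻¹' {x (i + k)}) :=
    isOpen_biInter_finset fun k _ =>
      (continuous_apply (i + (k:ℤ))).isOpen_preimage _ (isOpen_discrete _)
  have hmem : x ∈ ⋂ k ∈ Finset.range n, (fun y : ℤ → Bool => y (i + k)) ⁻¹' {x (i + k)} := by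
    simp
  refine Filter.mem_of_superset (hopen.mem_nhds hmem) ?_
  intro y hy
  simp only [Set.mem_iInter, Set.mem_preimage, Set.mem_singleton_iff, Finset.mem_range] at hy
  simp only [Set.mem_compl_iff, SGap, Set.mem_setOf_eq, not_forall]
  refine ⟨i, n, ?_⟩
  have : wordAt y i n = wordAt x i n := wordAt_congr fun k hk => hy k hk
  rwa [this]

lemma cylinder_isOpen (c : ℤ → Bool) (r : ℕ) :
    IsOpen {y : ℤ → Bool | ∀ j : ℤ, j.natAbs ≤ r → y j = c j} := by
  have : {y : ℤ → Bool | ∀ j : ℤ, j.natAbs ≤ r → y j = c j}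
      = ⋂ j ∈ Finset.Icc (-(r:ℤ)) r, (fun y : ℤ → Bool => y j) ⁻¹' {c j} := by
    ext y
    simp only [Set.mem_setOf_eq, Set.mem_iInter, Set.mem_preimage, Set.mem_singleton_iff,
      Finset.mem_Icc]
    constructor
    · intro h j hj; exact h j (by omega)
    · intro h j hj; exact h j (by omega)
  rw [this]
  exact isOpen_biInter_finset fun j _ =>
    (continuous_apply j).isOpen_preimage _ (isOpen_discrete _)

lemma radius_lemma {X : Set (ℤ → Bool)} (hXc : IsClosed X)
    (hshift : ∀ k : ℤ, ∀ x ∈ X, shiftPow k x ∈ X)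
    {H : (ℤ → Bool) → (ℤ → Bool)}
    (hcont : ContinuousOn H X)
    (hcomm : ∀ k : ℤ, ∀ x ∈ X, H (shiftPow k x) = shiftPow k (H x)) :
    ∃ r : ℕ, ∀ x ∈ X, ∀ y ∈ X, ∀ i : ℤ,
      (∀ j : ℤ, (j - i).natAbs ≤ r → x j = y j) → H x i = H y i := by
  have claim0 : ∀ x ∈ X, ∃ r : ℕ, ∀ y ∈ X,
      (∀ j : ℤ, j.natAbs ≤ r → y j = x j) → H y 0 = H x 0 := by
    intro x hx
    have hc : ContinuousWithinAt (fun y => H y 0) X x :=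
      (continuous_apply (0:ℤ)).continuousAt.comp_continuousWithinAt (hcont x hx)
    have hV : (fun y => H y 0) ⁻¹' {H x 0} ∈ nhdsWithin x X :=
      hc ((isOpen_discrete _).mem_nhds rfl)
    rw [mem_nhdsWithin] at hV
    obtain ⟨U, hU, hxU, hsub⟩ := hV
    have hUn : U ∈ nhds x := hU.mem_nhds hxU
    rw [nhds_pi, Filter.mem_pi'] at hUn
    obtain ⟨I, t, ht, hIt⟩ := hUn
    refine ⟨I.sup (fun j => j.natAbs), fun y hy hagree => ?_⟩
    have hyU : y ∈ U := by
      apply hIt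
      intro j hj
      have : y j = x j := hagree j (Finset.le_sup hj)
      rw [this]
      exact mem_of_mem_nhds (ht j)
    exact hsub ⟨hyU, hy⟩
  choose! ρ hρ using claim0
  have hXcpt : IsCompact X := hXc.isCompact
  set U : X → Set (ℤ → Bool) := fun c => {y | ∀ j : ℤ, j.natAbs ≤ ρ c → y j = (c : ℤ → Bool) j}
    with hUdef
  obtain ⟨T, hT⟩ := hXcpt.elim_finite_subcover U (fun c => cylinder_isOpen _ _)
    (fun z hz => Set.mem_iUnion.2 ⟨⟨z, hz⟩, fun j _ => rfl⟩)
  set r : ℕ := T.sup (fun c => ρ c) with hrdef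
  have key0 : ∀ x ∈ X, ∀ y ∈ X, (∀ j : ℤ, j.natAbs ≤ r → x j = y j) → H x 0 = H y 0 := by
    intro x hxX y hyX hagree
    obtain ⟨c, hcT, hxc⟩ : ∃ c ∈ T, x ∈ U c := by
      have := hT hxX
      simpa using this
    have hρc : ρ (c : ℤ → Bool) ≤ r := Finset.le_sup (f := fun c : X => ρ (c : ℤ → Bool)) hcT
    have hyc : y ∈ U c := by
      intro j hj
      rw [← hagree j (le_trans hj hρc)]
      exact hxc j hj
    rw [hρ c c.2 x hxX hxc, hρ c c.2 y hyX hyc]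
  refine ⟨r, fun x hxX y hyX i hagree => ?_⟩
  have h1 : H (shiftPow i x) 0 = H (shiftPow i y) 0 := by
    apply key0 _ (hshift i x hxX) _ (hshift i y hyX)
    intro j hj
    show x (j + i) = y (j + i)
    exact hagree (j + i) (by omega)
  rw [hcomm i x hxX, hcomm i y hyX] at h1
  simpa [shiftPow] using h1

end Topo

section ShiftAlg
variable {A : Type*}

lemma shiftPow_zero (x : ℤ → A) : shiftPow 0 x = x := by
  funext i; simp [shiftPow]

lemma shiftMap_shiftPow (k : ℤ) (x : ℤ → A) :
    shiftMap (shiftPow k x) = shiftPow (k + 1) x := by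
  funext i; show x (i + 1 + k) = x (i + (k + 1)); congr 1; ring

lemma comm_shiftPow {X : Set (ℤ → Bool)} {H : (ℤ → Bool) → (ℤ → Bool)}
    (hshift : ∀ k : ℤ, ∀ x ∈ X, shiftPow k x ∈ X)
    (hcomm : ∀ x ∈ X, H (shiftMap x) = shiftMap (H x)) :
    ∀ k : ℤ, ∀ x ∈ X, H (shiftPow k x) = shiftPow k (H x) := by
  intro k
  induction k using Int.induction_on with
  | zero => intro x hx; rw [shiftPow_zero, shiftPow_zero]
  | succ k ih =>
    intro x hx
    rw [← shiftMap_shiftPow, hcomm _ (hshift k x hx), ih x hx, shiftMap_shiftPow]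
  | pred k ih =>
    intro x hx
    have hw : shiftPow (-(k:ℤ) - 1) x ∈ X := hshift _ x hx
    have h1 := hcomm _ hw
    rw [shiftMap_shiftPow, show -(k:ℤ) - 1 + 1 = -(k:ℤ) by ring, ih x hx] at h1
    funext i
    have h3 := congrFun h1 (i - 1)
    simp only [shiftPow, shiftMap] at h3 ⊢
    rw [show i - 1 + 1 = i by ring] at h3
    rw [← h3]
    congr 1
    ring

lemma const_of_shift_fixed {f : ℤ → A} (h : shiftMap f = f) : ∀ j : ℤ, f j = f 0 := by
  have step : ∀ i : ℤ, f (i + 1) = f i := fun i => congrFun h i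
  intro j
  induction j using Int.induction_on with
  | zero => rfl
  | succ k ih => rw [step k, ih]
  | pred k ih => rw [← ih, ← step (-(k:ℤ) - 1)]; congr 1; ring

end ShiftAlg

section EvP
variable {S : Set ℕ}

lemma exists_large_notmem (hnp : ¬ EventuallyPeriodic S) (N : ℕ) :
    ∃ n : ℕ, N ≤ n ∧ n ∉ S := by
  by_contra hcon
  push_neg at hcon
  exact hnp ⟨1, one_pos, N, fun n hn =>
    ⟨fun _ => hcon (n + 1) (by omega), fun _ => hcon n hn⟩⟩

lemma shift_closure (hnp : ¬ EventuallyPeriodic S) (t : ℤ) (N : ℕ)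
    (h : ∀ n ∈ S, N ≤ n → ∃ m ∈ S, (m : ℤ) = (n : ℤ) + t) : t = 0 := by
  by_contra ht0
  rcases lt_trichotomy t 0 with hneg | h0 | hpos
  · -- t < 0
    set s : ℕ := (-t).toNat with hs
    have hsz : (s : ℤ) = -t := Int.toNat_of_nonneg (by omega)
    have hs0 : 0 < s := by omega
    have down : ∀ a ∈ S, N ≤ a → s ≤ a ∧ a - s ∈ S := by
      intro a ha hNa
      obtain ⟨m, hm, hmeq⟩ := h a ha hNa
      have h2 : s ≤ a := by omega
      have h3 : m = a - s := by omega
      exact ⟨h2, h3 ▸ hm⟩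
    have chain : ∀ (j : ℕ) (base a : ℕ), a ∈ S → N ≤ base → a = base + s + s * j →
        base + s ∈ S := by
      intro j
      induction j with
      | zero =>
        intro base a ha _ heq
        have : a = base + s := by omega
        rwa [this] at ha
      | succ j ih =>
        intro base a ha hNb heq
        have hmul : s * (j + 1) = s * j + s := by ring
        rw [hmul] at heq
        have hNa : N ≤ a := by omega
        obtain ⟨hsa, ha'⟩ := down a ha hNa
        exact ih base (a - s) ha' hNb (by omega)
    set D : Set ℕ := {n | N ≤ n ∧ n ∈ S ∧ n + s ∉ S} with hD
    have hinj : Set.InjOn (· % s) D := by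
      have main : ∀ n ∈ D, ∀ n' ∈ D, n % s = n' % s → n < n' → False := by
        intro n hn n' hn' hmod hlt
        have hn1 : N ≤ n := hn.1
        have hn1' : N ≤ n' := hn'.1
        have hd : s ∣ n' - n := (Nat.modEq_iff_dvd' (le_of_lt hlt)).1 hmod
        obtain ⟨j, hj⟩ := hd
        obtain ⟨j', rfl⟩ : ∃ j', j = j' + 1 := ⟨j - 1, by
          rcases Nat.eq_zero_or_pos j with h0 | h1
          · subst h0; simp at hj; omega
          · omega⟩
        have hmul : s * (j' + 1) = s * j' + s := by ring
        rw [hmul] at hj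
        exact hn.2.2 (chain j' n n' hn'.2.1 hn.1 (by omega))
      intro n hn n' hn' hmod
      rcases lt_trichotomy n n' with hlt | he | hgt
      · exact absurd (main n hn n' hn' hmod hlt) (by simp)
      · exact he
      · exact absurd (main n' hn' n hn hmod.symm hgt) (by simp)
    have hfin : D.Finite := by
      apply Set.Finite.of_finite_image (f := (· % s))
      · exact (Set.finite_Iio s).subset (by
          rintro _ ⟨n, _, rfl⟩
          exact Nat.mod_lt _ hs0)
      · exact hinj
    obtain ⟨B, hB⟩ := hfin.bddAbove
    apply hnp
    refine ⟨s, hs0, max N (B + 1), fun n hn => ?_⟩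
    constructor
    · intro hnS
      by_contra hcon
      have hmem : n ∈ D := ⟨le_trans (le_max_left _ _) hn, hnS, hcon⟩
      have := hB hmem
      omega
    · intro hnS
      have := down (n + s) hnS (by omega)
      simpa using this.2
  · exact ht0 h0
  · -- t > 0
    set s : ℕ := t.toNat with hs
    have hsz : (s : ℤ) = t := Int.toNat_of_nonneg (by omega)
    have hs0 : 0 < s := by omega
    have up : ∀ a ∈ S, N ≤ a → a + s ∈ S := by
      intro a ha hNa
      obtain ⟨m, hm, hmeq⟩ := h a ha hNa
      have : m = a + s := by omega
      exact this ▸ hm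
    have chain : ∀ (j : ℕ) (a : ℕ), a ∈ S → N ≤ a → a + s * j ∈ S := by
      intro j
      induction j with
      | zero => intro a ha _; simpa using ha
      | succ j ih =>
        intro a ha hNa
        have h1 := up a ha hNa
        have h2 := ih (a + s) h1 (by omega)
        have hmul : a + s + s * j = a + s * (j + 1) := by ring
        rwa [hmul] at h2
    set D : Set ℕ := {n | N ≤ n ∧ n ∉ S ∧ n + s ∈ S} with hD
    have hinj : Set.InjOn (· % s) D := by
      have main : ∀ n ∈ D, ∀ n' ∈ D, n % s = n' % s → n < n' → False := by
        intro n hn n' hn' hmod hlt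
        have hn1 : N ≤ n := hn.1
        have hn1' : N ≤ n' := hn'.1
        have hd : s ∣ n' - n := (Nat.modEq_iff_dvd' (le_of_lt hlt)).1 hmod
        obtain ⟨j, hj⟩ := hd
        obtain ⟨j', rfl⟩ : ∃ j', j = j' + 1 := ⟨j - 1, by
          rcases Nat.eq_zero_or_pos j with h0 | h1
          · subst h0; simp at hj; omega
          · omega⟩
        have hmul : s * (j' + 1) = s * j' + s := by ring
        rw [hmul] at hj
        have h1 := chain j' (n + s) hn.2.2 (by omega)
        exact hn'.2.1 (by rwa [show n + s + s * j' = n' by omega] at h1)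
      intro n hn n' hn' hmod
      rcases lt_trichotomy n n' with hlt | he | hgt
      · exact absurd (main n hn n' hn' hmod hlt) (by simp)
      · exact he
      · exact absurd (main n' hn' n hn hmod.symm hgt) (by simp)
    have hfin : D.Finite := by
      apply Set.Finite.of_finite_image (f := (· % s))
      · exact (Set.finite_Iio s).subset (by
          rintro _ ⟨n, _, rfl⟩
          exact Nat.mod_lt _ hs0)
      · exact hinj
    obtain ⟨B, hB⟩ := hfin.bddAbove
    apply hnp
    refine ⟨s, hs0, max N (B + 1), fun n hn => ?_⟩
    constructor
    · intro hnS
      exact up n hnS (by omega)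
    · intro hnS
      by_contra hcon
      have hmem : n ∈ D := ⟨le_trans (le_max_left _ _) hn, hcon, hnS⟩
      have := hB hmem
      omega

end EvP

section Points
variable {S : Set ℕ}

lemma wordAt_eq_wordAt {A : Type*} {x y : ℤ → A} {i i' : ℤ} {n : ℕ}
    (h : ∀ k : ℕ, k < n → x (i + k) = y (i' + k)) : wordAt x i n = wordAt y i' n := by
  rw [wordAt_eq, wordAt_eq]
  exact List.map_congr_left fun k hk => h k (List.mem_range.1 hk)

lemma allOnes_mem (hinf : S.Infinite) : (fun _ : ℤ => true) ∈ SGap S := by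
  intro i n
  obtain ⟨A, hA, hn⟩ := hinf.exists_gt n
  refine ⟨genWord A, InGenStar.genWord hA, ?_⟩
  rw [wordAt_replicate (fun k _ => rfl)]
  refine ⟨[false], List.replicate (A - n) true, ?_⟩
  show [false] ++ List.replicate n true ++ List.replicate (A - n) true = genWord A
  rw [genWord, List.append_assoc, ← List.replicate_add,
    show n + (A - n) = A by omega]
  rfl

lemma rep_split {c : Bool} {m k : ℕ} (h : k ≤ m) :
    List.replicate m c = List.replicate k c ++ List.replicate (m - k) c := by
  rw [← List.replicate_add, show k + (m - k) = m by omega]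

lemma rep_rep_append {c : Bool} (m k : ℕ) (t : List Bool) :
    List.replicate m c ++ (List.replicate k c ++ t) = List.replicate (m + k) c ++ t := by
  rw [List.replicate_add, List.append_assoc]

lemma pPoint_mem (hinf : S.Infinite) :
    (fun j : ℤ => if j = 0 then false else true) ∈ SGap S := by
  set p : ℤ → Bool := fun j => if j = 0 then false else true with hp
  intro i n
  obtain ⟨a, ha⟩ : ∃ a : ℕ, a = i.natAbs + n + 1 := ⟨_, rfl⟩
  obtain ⟨b, hb⟩ : ∃ b : ℕ, b = i.natAbs + n + 1 := ⟨_, rfl⟩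
  obtain ⟨A, hA, haA⟩ := hinf.exists_gt a
  obtain ⟨B, hB, hbB⟩ := hinf.exists_gt b
  have h1 : wordAt p (-(a:ℤ)) a = List.replicate a true := by
    apply wordAt_replicate
    intro k hk
    show (if -(a:ℤ) + k = 0 then false else true) = true
    rw [if_neg (by omega)]
  have h2 : wordAt p (0 + 1 : ℤ) b = List.replicate b true := by
    apply wordAt_replicate
    intro k hk
    show (if (0:ℤ) + 1 + k = 0 then false else true) = true
    rw [if_neg (by omega)]
  have hword : wordAt p (-(a:ℤ)) (a + (1 + b)) =
      List.replicate a true ++ ([false] ++ List.replicate b true) := by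
    have hs1 : wordAt p (-(a:ℤ)) (a + (1 + b))
        = wordAt p (-(a:ℤ)) a ++ wordAt p (-(a:ℤ) + a) (1 + b) := wordAt_append p _ a (1+b)
    have hs2 : wordAt p (0:ℤ) (1 + b) = wordAt p (0:ℤ) 1 ++ wordAt p (0 + 1 : ℤ) b := by
      have := wordAt_append p (0:ℤ) 1 b
      rwa [show ((1:ℕ):ℤ) = (1:ℤ) by norm_num] at this
    rw [hs1, show -(a:ℤ) + a = 0 by ring, hs2, wordAt_one, h1, h2]
    show _ ++ ([(if (0:ℤ) = 0 then false else true)] ++ _) = _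
    rw [if_pos rfl]
  refine ⟨genWord A ++ genWord B,
    InGenStar.append (InGenStar.genWord hA) (InGenStar.genWord hB), ?_⟩
  have hmono : wordAt p i n <:+: wordAt p (-(a:ℤ)) (a + (1 + b)) := by
    apply wordAt_infix_mono
    · omega
    · omega
  refine hmono.trans ?_
  rw [hword]
  refine ⟨false :: List.replicate (A - a) true, List.replicate (B - b) true, ?_⟩
  show (false :: List.replicate (A - a) true) ++
      (List.replicate a true ++ ([false] ++ List.replicate b true)) ++
      List.replicate (B - b) true = genWord A ++ genWord B
  rw [genWord, genWord]
  simp only [List.cons_append, List.append_assoc, ← List.replicate_add, List.nil_append,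
    rep_rep_append]
  rw [show A - a + a = A by omega, show b + (B - b) = B by omega]

/-- Modifying a point of `X_{S,l}` by inserting a gap `n ∈ S` after the origin. -/
lemma xn_mem (hinf : S.Infinite) {x : ℤ → Bool} (hx : x ∈ SGap S) (hx0 : x 0 = false)
    (hpos : ∀ i : ℤ, 0 < i → x i = true) {n : ℕ} (hn : n ∈ S) :
    (fun j : ℤ => if j ≤ (n:ℤ) then x j else if j = (n:ℤ)+1 then false else true) ∈ SGap S := by
  set xn : ℤ → Bool :=
    fun j => if j ≤ (n:ℤ) then x j else if j = (n:ℤ)+1 then false else true with hxn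
  intro i m
  obtain ⟨i', hi'1, hi'2⟩ : ∃ i' : ℤ, i' ≤ i ∧ i' ≤ 0 := ⟨min i 0, min_le_left _ _, min_le_right _ _⟩
  obtain ⟨b, hbval⟩ : ∃ b : ℕ, (b:ℤ) = max (i + m) 0 := ⟨(max (i+m) 0).toNat,
    Int.toNat_of_nonneg (le_max_right _ _)⟩
  obtain ⟨B, hB, hbB⟩ := hinf.exists_gt b
  obtain ⟨c, hcval⟩ : ∃ c : ℕ, (c:ℤ) = -i' := ⟨(-i').toNat, Int.toNat_of_nonneg (by omega)⟩
  obtain ⟨J, hJ, hocc⟩ := hx i' (c + 1)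
  have hu : wordAt x i' (c+1) = wordAt x i' c ++ [false] := by
    have := wordAt_append x i' c 1
    rwa [wordAt_one, show i' + (c:ℤ) = 0 by omega, hx0] at this
  rw [hu] at hocc
  obtain ⟨J', hJ', hocc'⟩ := glue_right hJ hocc hn hB (le_of_lt hbB)
  have hbig : wordAt xn i' ((c+1) + (n + (1 + b))) =
      (wordAt x i' c ++ [false]) ++ (List.replicate n true ++ false :: List.replicate b true) := by
    have hs1 : wordAt xn i' ((c+1) + (n + (1 + b)))
        = wordAt xn i' (c+1) ++ wordAt xn (i' + (c+1:ℕ)) (n + (1 + b)) :=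
      wordAt_append xn i' (c+1) (n + (1+b))
    have he1 : wordAt xn i' (c+1) = wordAt x i' c ++ [false] := by
      rw [← hu]
      apply wordAt_congr
      intro k hk
      show (if i' + k ≤ (n:ℤ) then x _ else _) = x (i' + k)
      rw [if_pos (by omega)]
    have hstart : i' + ((c:ℕ):ℤ) + 1 = 1 := by omega
    have hs2 : wordAt xn (i' + (c+1:ℕ)) (n + (1 + b))
        = wordAt xn 1 n ++ wordAt xn (1 + (n:ℕ)) (1 + b) := by
      have := wordAt_append xn (1:ℤ) n (1+b)
      rw [show (i' + ((c+1:ℕ):ℤ)) = 1 by push_cast; omega]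
      exact this
    have he2 : wordAt xn 1 n = List.replicate n true := by
      apply wordAt_replicate
      intro k hk
      show (if 1 + (k:ℤ) ≤ (n:ℤ) then x _ else _) = true
      rw [if_pos (by omega)]
      exact hpos _ (by omega)
    have hs3 : wordAt xn (1 + (n:ℕ)) (1 + b)
        = wordAt xn (1 + (n:ℕ)) 1 ++ wordAt xn (1 + (n:ℕ) + 1) b := by
      have := wordAt_append xn (1 + (n:ℕ) : ℤ) 1 b
      rwa [show ((1:ℕ):ℤ) = (1:ℤ) by norm_num] at this
    have he3 : wordAt xn (1 + (n:ℕ)) 1 = [false] := by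
      have hv : xn (1 + (n:ℕ)) = false := by
        show (if 1 + (n:ℤ) ≤ (n:ℤ) then x _ else if 1 + (n:ℤ) = (n:ℤ)+1 then false else true)
          = false
        rw [if_neg (by omega), if_pos (by omega)]
      rw [wordAt_one, hv]
    have he4 : wordAt xn (1 + (n:ℕ) + 1) b = List.replicate b true := by
      apply wordAt_replicate
      intro k hk
      show (if 1 + (n:ℤ) + 1 + k ≤ (n:ℤ) then x _
        else if 1 + (n:ℤ) + 1 + k = (n:ℤ)+1 then false else true) = true
      rw [if_neg (by omega), if_neg (by omega)]
    rw [hs1, he1, hs2, he2, hs3, he3, he4]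
    simp [List.append_assoc]
  refine ⟨J', hJ', List.IsInfix.trans ?_ hocc'⟩
  have : (wordAt x i' c ++ [false]) ++ (List.replicate n true ++ false :: List.replicate b true)
      = wordAt x i' c ++ [false] ++ (List.replicate n true ++ false :: List.replicate b true) := by
    simp [List.append_assoc]
  rw [← this, ← hbig]
  apply wordAt_infix_mono
  · exact hi'1
  · push_cast; omega

/-- Modifying a point of `X_{S,→}` by inserting a gap `n ∈ S` before the origin. -/
lemma yn_mem (hinf : S.Infinite) {y : ℤ → Bool} (hy : y ∈ SGap S) (hy0 : y 0 = false)
    (hneg : ∀ i : ℤ, i < 0 → y i = true) {n : ℕ} (hn : n ∈ S) :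
    (fun j : ℤ => if 0 ≤ j then y j else if j = -(n:ℤ)-1 then false else true) ∈ SGap S := by
  set yn : ℤ → Bool :=
    fun j => if 0 ≤ j then y j else if j = -(n:ℤ)-1 then false else true with hyn
  intro i m
  obtain ⟨a, haval⟩ : ∃ a : ℕ, (a:ℤ) = max (-(n:ℤ)-1 - i) 0 :=
    ⟨(max (-(n:ℤ)-1 - i) 0).toNat, Int.toNat_of_nonneg (le_max_right _ _)⟩
  obtain ⟨A, hA, haA⟩ := hinf.exists_gt a
  obtain ⟨k', hkval⟩ : ∃ k' : ℕ, (k':ℤ) = max (i + m) 1 - 1 :=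
    ⟨(max (i+m) 1 - 1).toNat, Int.toNat_of_nonneg (by omega)⟩
  obtain ⟨J, hJ, hocc⟩ := hy 0 (1 + k')
  have hu : wordAt y 0 (1 + k') = false :: wordAt y 1 k' := by
    have := wordAt_append y 0 1 k'
    rwa [wordAt_one, hy0, show (0:ℤ) + ((1:ℕ):ℤ) = 1 by norm_num] at this
  rw [hu] at hocc
  obtain ⟨J', hJ', hocc'⟩ := glue_left hJ hocc hn hA (le_of_lt haA)
  set i' : ℤ := -(n:ℤ) - 1 - a with hi'
  have hbig : wordAt yn i' (a + (1 + (n + (1 + k')))) =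
      List.replicate a true ++ (false :: (List.replicate n true ++ (false :: wordAt y 1 k'))) := by
    have hs1 : wordAt yn i' (a + (1 + (n + (1 + k'))))
        = wordAt yn i' a ++ wordAt yn (i' + a) (1 + (n + (1 + k'))) :=
      wordAt_append yn i' a _
    have he1 : wordAt yn i' a = List.replicate a true := by
      apply wordAt_replicate
      intro k hk
      show (if 0 ≤ i' + k then y _ else if i' + k = -(n:ℤ)-1 then false else true) = true
      rw [if_neg (by omega), if_neg (by omega)]
    have hs2 : wordAt yn (i' + a) (1 + (n + (1 + k')))
        = wordAt yn (i' + a) 1 ++ wordAt yn (i' + a + 1) (n + (1 + k')) := by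
      have := wordAt_append yn (i' + a) 1 (n + (1 + k'))
      rwa [show ((1:ℕ):ℤ) = (1:ℤ) by norm_num] at this
    have he2 : wordAt yn (i' + a) 1 = [false] := by
      have hv : yn (i' + a) = false := by
        show (if 0 ≤ i' + a then y _ else if i' + a = -(n:ℤ)-1 then false else true) = false
        rw [if_neg (by omega), if_pos (by omega)]
      rw [wordAt_one, hv]
    have hs3 : wordAt yn (i' + a + 1) (n + (1 + k'))
        = wordAt yn (i' + a + 1) n ++ wordAt yn (i' + a + 1 + n) (1 + k') :=
      wordAt_append yn _ n _
    have he3 : wordAt yn (i' + a + 1) n = List.replicate n true := by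
      apply wordAt_replicate
      intro k hk
      show (if 0 ≤ i' + a + 1 + k then y _
        else if i' + a + 1 + k = -(n:ℤ)-1 then false else true) = true
      rw [if_neg (by omega), if_neg (by omega)]
    have he4 : wordAt yn (i' + a + 1 + n) (1 + k') = wordAt y 0 (1 + k') := by
      apply wordAt_eq_wordAt
      intro k hk
      have harg : i' + a + 1 + n + k = 0 + k := by omega
      rw [harg]
      show (if 0 ≤ (0:ℤ) + k then y _ else _) = y ((0:ℤ) + k)
      rw [if_pos (by omega)]
    rw [hs1, he1, hs2, he2, hs3, he3, he4, hu]
    simp [List.append_assoc]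
  have hmono : wordAt yn i m <:+: wordAt yn i' (a + (1 + (n + (1 + k')))) := by
    apply wordAt_infix_mono
    · omega
    · push_cast; omega
  exact ⟨J', hJ', hmono.trans (by rw [hbig]; exact hocc')⟩

/-- Two copies of a finitely-supported configuration, separated: the swap case point. -/
lemma zn_mem {v : ℤ → Bool} (hv : v ∈ SGap S) (h0 : 0 ∈ S) (R : ℕ)
    (hout : ∀ j : ℤ, (R:ℤ) < |j| → v j = false) {n : ℕ} (hn2R : 2*R + 1 ≤ n) :
    (fun j : ℤ => if j ≤ (R:ℤ) then v j else v (j - (n:ℤ) - 1)) ∈ SGap S := by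
  set zn : ℤ → Bool := fun j => if j ≤ (R:ℤ) then v j else v (j - (n:ℤ) - 1) with hzn
  intro i m
  set V : List Bool := wordAt v (-(R:ℤ)) (2*R+1) with hV
  -- the word 0 V 0 occurs in the language
  obtain ⟨J, hJ, hocc⟩ := hv (-(R:ℤ)-1) (1 + ((2*R+1) + 1))
  have hsplit : wordAt v (-(R:ℤ)-1) (1 + ((2*R+1) + 1)) = false :: (V ++ [false]) := by
    have hs1 : wordAt v (-(R:ℤ)-1) (1 + ((2*R+1) + 1))
        = wordAt v (-(R:ℤ)-1) 1 ++ wordAt v (-(R:ℤ)-1+1) ((2*R+1) + 1) := by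
      have := wordAt_append v (-(R:ℤ)-1) 1 ((2*R+1)+1)
      rwa [show ((1:ℕ):ℤ) = (1:ℤ) by norm_num] at this
    have hs2 : wordAt v (-(R:ℤ)) ((2*R+1) + 1)
        = wordAt v (-(R:ℤ)) (2*R+1) ++ wordAt v (-(R:ℤ) + (2*R+1:ℕ)) 1 :=
      wordAt_append v _ _ 1
    have he1 : wordAt v (-(R:ℤ)-1) 1 = [false] := by
      rw [wordAt_one, hout _ (by rw [abs_of_nonpos (by omega)]; omega)]
    have he2 : wordAt v (-(R:ℤ) + (2*R+1:ℕ)) 1 = [false] := by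
      rw [wordAt_one, hout _ (by push_cast; rw [abs_of_nonneg (by omega)]; omega)]
    rw [hs1, show -(R:ℤ)-1+1 = -(R:ℤ) by ring, hs2, he1, he2]
    simp [hV]
  rw [hsplit] at hocc
  obtain ⟨la, hla, hjoin⟩ := exists_block_list hJ hocc
  -- parameters
  obtain ⟨el', helval⟩ : ∃ el' : ℕ, (el':ℤ) = max (-(R:ℤ) - i) 1 - 1 :=
    ⟨(max (-(R:ℤ) - i) 1 - 1).toNat, Int.toNat_of_nonneg (by omega)⟩
  obtain ⟨e₂, he₂val⟩ : ∃ e₂ : ℕ, (e₂:ℤ) = max (i + m - ((n:ℤ)+2+R)) 0 :=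
    ⟨(max (i + m - ((n:ℤ)+2+R)) 0).toNat, Int.toNat_of_nonneg (le_max_right _ _)⟩
  obtain ⟨nm', hnm'⟩ : ∃ nm' : ℕ, n = 2*R + nm' + 1 := ⟨n - 2*R - 1, by omega⟩
  set i' : ℤ := -(R:ℤ) - el' - 1 with hi'
  set L : ℕ := (el'+1) + ((2*R+1) + ((nm'+1) + ((2*R+1) + e₂))) with hL
  -- the big word
  have hbig : wordAt zn i' L = List.replicate (el'+1) false ++ (V ++
      (List.replicate (nm'+1) false ++ (V ++ List.replicate e₂ false))) := by
    have hs1 : wordAt zn i' L = wordAt zn i' (el'+1)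
        ++ wordAt zn (i' + (el'+1:ℕ)) ((2*R+1) + ((nm'+1) + ((2*R+1) + e₂))) :=
      wordAt_append zn i' (el'+1) _
    have he1 : wordAt zn i' (el'+1) = List.replicate (el'+1) false := by
      apply wordAt_replicate
      intro k hk
      show (if i' + k ≤ (R:ℤ) then v _ else _) = false
      rw [if_pos (by omega)]
      exact hout _ (by rw [abs_of_nonpos (by omega)]; omega)
    have hst1 : i' + ((el'+1:ℕ):ℤ) = -(R:ℤ) := by push_cast; omega
    have hs2 : wordAt zn (-(R:ℤ)) ((2*R+1) + ((nm'+1) + ((2*R+1) + e₂)))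
        = wordAt zn (-(R:ℤ)) (2*R+1)
          ++ wordAt zn (-(R:ℤ) + (2*R+1:ℕ)) ((nm'+1) + ((2*R+1) + e₂)) :=
      wordAt_append zn _ _ _
    have he2 : wordAt zn (-(R:ℤ)) (2*R+1) = V := by
      apply wordAt_congr
      intro k hk
      show (if -(R:ℤ) + k ≤ (R:ℤ) then v _ else _) = v (-(R:ℤ) + k)
      rw [if_pos (by omega)]
    have hst2 : -(R:ℤ) + ((2*R+1:ℕ):ℤ) = (R:ℤ) + 1 := by push_cast; omega
    have hs3 : wordAt zn ((R:ℤ)+1) ((nm'+1) + ((2*R+1) + e₂))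
        = wordAt zn ((R:ℤ)+1) (nm'+1) ++ wordAt zn ((R:ℤ)+1 + (nm'+1:ℕ)) ((2*R+1) + e₂) :=
      wordAt_append zn _ _ _
    have he3 : wordAt zn ((R:ℤ)+1) (nm'+1) = List.replicate (nm'+1) false := by
      apply wordAt_replicate
      intro k hk
      show (if (R:ℤ)+1 + k ≤ (R:ℤ) then v _ else v ((R:ℤ)+1+k - n - 1)) = false
      rw [if_neg (by omega)]
      exact hout _ (by rw [abs_of_nonpos (by omega)]; omega)
    have hst3 : (R:ℤ)+1 + ((nm'+1:ℕ):ℤ) = (n:ℤ) + 1 - R := by push_cast; omega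
    have hs4 : wordAt zn ((n:ℤ)+1-R) ((2*R+1) + e₂)
        = wordAt zn ((n:ℤ)+1-R) (2*R+1) ++ wordAt zn ((n:ℤ)+1-R + (2*R+1:ℕ)) e₂ :=
      wordAt_append zn _ _ _
    have he4 : wordAt zn ((n:ℤ)+1-R) (2*R+1) = V := by
      apply wordAt_eq_wordAt
      intro k hk
      show (if (n:ℤ)+1-R + k ≤ (R:ℤ) then v _ else v ((n:ℤ)+1-R+k - n - 1)) = v (-(R:ℤ) + k)
      rw [if_neg (by omega), show (n:ℤ)+1-R+k - n - 1 = -(R:ℤ) + k by ring]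
    have he5 : wordAt zn ((n:ℤ)+1-R + (2*R+1:ℕ)) e₂ = List.replicate e₂ false := by
      apply wordAt_replicate
      intro k hk
      show (if (n:ℤ)+1-R+(2*R+1:ℕ) + k ≤ (R:ℤ) then v _
        else v ((n:ℤ)+1-R+(2*R+1:ℕ)+k - n - 1)) = false
      rw [if_neg (by push_cast; omega)]
      exact hout _ (by push_cast; rw [abs_of_nonneg (by omega)]; omega)
    rw [hs1, he1, hst1, hs2, he2, hst2, hs3, he3, hst3, hs4, he4, he5]
  -- the container
  set J' : List Bool := ((List.replicate el' 0 ++ la ++ List.replicate nm' 0 ++ la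
    ++ List.replicate e₂ 0).map genWord).flatten with hJ'
  have hJ'gen : InGenStar S J' := by
    refine ⟨_, ?_, rfl⟩
    intro q hq
    simp only [List.mem_append, List.mem_replicate] at hq
    rcases hq with ((((⟨_, h⟩ | h) | ⟨_, h⟩) | h) | ⟨_, h⟩)
    · exact h ▸ h0
    · exact hla q h
    · exact h ▸ h0
    · exact hla q h
    · exact h ▸ h0
  have hJ'eq : J' = List.replicate el' false ++ ((false :: V) ++ (List.replicate nm' false
      ++ ((false :: V) ++ List.replicate e₂ false))) := by
    rw [hJ']
    simp only [List.map_append, List.flatten_append, join_rep_genzero, hjoin, List.append_assoc]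
  have hwordJ : wordAt zn i' L = J' := by
    rw [hbig, hJ'eq, List.replicate_succ' (n := el'), List.replicate_succ' (n := nm')]
    simp [List.append_assoc]
  refine ⟨J', hJ'gen, ?_⟩
  rw [← hwordJ]
  apply wordAt_infix_mono
  · omega
  · push_cast; omega

end Points

/-- For a non-sofic `S`-gap shift, every automorphism `F` has an intrinsic
shift: there is `i ∈ ℤ` with `F(X_{S,ℓ}) ⊆ σ^i(X_{S,ℓ})` and `F(X_{S,→}) ⊆ σ^i(X_{S,→})`. -/
theorem stmt12 (S : Set ℕ) (hS : S.Nonempty) (hinf : S.Infinite)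
    (hnp : ¬ EventuallyPeriodic S)
    (F : (ℤ → Bool) → (ℤ → Bool)) (hF : IsAutomorphism (SGap S) F) :
    ∃ i : ℤ, F '' SGapLeft S ⊆ shiftPow i '' SGapLeft S ∧
      F '' SGapRight S ⊆ shiftPow i '' SGapRight S := by
  classical
  obtain ⟨hmap, hcont, hcomm, G, hGmap, hGcont, hGcomm, hGF, hFG⟩ := hF
  have hshift : ∀ k : ℤ, ∀ x ∈ SGap S, shiftPow k x ∈ SGap S := fun k x hx => sgap_shiftPow hx k
  have hFpow : ∀ k : ℤ, ∀ x ∈ SGap S, F (shiftPow k x) = shiftPow k (F x) :=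
    comm_shiftPow hshift hcomm
  have hGpow : ∀ k : ℤ, ∀ x ∈ SGap S, G (shiftPow k x) = shiftPow k (G x) :=
    comm_shiftPow hshift hGcomm
  obtain ⟨R, hR⟩ := radius_lemma (isClosed_sgap S) hshift hcont hFpow
  obtain ⟨Rg, hRg⟩ := radius_lemma (isClosed_sgap S) hshift hGcont hGpow
  set z1 : ℤ → Bool := fun _ => true with hz1def
  have hz1X : z1 ∈ SGap S := allOnes_mem hinf
  set p : ℤ → Bool := fun j => if j = 0 then false else true with hpdef
  have hpX : p ∈ SGap S := pPoint_mem hinf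
  have hp0 : p 0 = false := by simp [hpdef]
  have hpne : ∀ j : ℤ, j ≠ 0 → p j = true := fun j hj => if_neg hj
  have hpL : p ∈ SGapLeft S := ⟨hpX, hp0, fun i hi => if_neg (by omega)⟩
  have hpR : p ∈ SGapRight S := ⟨hpX, hp0, fun i hi => if_neg (by omega)⟩
  have hsm : shiftMap z1 = z1 := rfl
  have hFz1c : ∀ j, F z1 j = F z1 0 := by
    apply const_of_shift_fixed
    have := hcomm z1 hz1X
    rw [hsm] at this
    exact this.symm
  -- F fixes the all-ones point (otherwise: swap contradiction)
  have hFz1 : F z1 = z1 := by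
    rcases Bool.eq_false_or_eq_true (F z1 0) with hc | hc
    · funext j
      rw [hFz1c j, hc]
    · exfalso
      have hFz1f : ∀ j, F z1 j = false := fun j => (hFz1c j).trans hc
      have hz0X : F z1 ∈ SGap S := hmap hz1X
      -- 0 ∈ S
      have h0S : (0:ℕ) ∈ S := by
        obtain ⟨J, hJ, hocc⟩ := hz0X 0 2
        have hw : wordAt (F z1) 0 2 = false :: (List.replicate 0 true ++ false :: []) := by
          have : wordAt (F z1) 0 2 = List.replicate 2 false :=
            wordAt_replicate (fun k _ => hFz1f _)
          rw [this]; rfl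
        rw [hw] at hocc
        exact mem_S_of_gap_infix hJ hocc
      set v : ℤ → Bool := F p with hvdef
      have hvX : v ∈ SGap S := hmap hpX
      have hvout : ∀ j : ℤ, (R:ℤ) < |j| → v j = false := by
        intro j hj
        have h1 : F p j = F z1 j := by
          apply hR p hpX z1 hz1X
          intro k hk
          apply hpne
          rcases abs_cases j with ⟨he, _⟩ | ⟨he, _⟩ <;> omega
        rw [hvdef, h1, hFz1f]
      obtain ⟨n, hnbig, hnS⟩ := exists_large_notmem hnp (2*R + 2*Rg + 2)
      set zn : ℤ → Bool := fun j => if j ≤ (R:ℤ) then v j else v (j - (n:ℤ) - 1) with hzndef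
      have hznX : zn ∈ SGap S := zn_mem hvX h0S R hvout (by omega)
      have hGv : G v = p := hGF p hpX
      have hGleft : ∀ j : ℤ, j ≤ (n:ℤ) - R - Rg → G zn j = p j := by
        intro j hj
        have h1 : G zn j = G v j := by
          apply hRg zn hznX v hvX
          intro k hk
          show (if k ≤ (R:ℤ) then v k else v (k - (n:ℤ) - 1)) = v k
          by_cases hkR : k ≤ (R:ℤ)
          · rw [if_pos hkR]
          · rw [if_neg hkR, hvout _ (by rw [abs_of_nonpos (by omega)]; omega),
              hvout _ (by rw [abs_of_nonneg (by omega)]; omega)]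
        rw [h1, hGv]
      have hGright : ∀ j : ℤ, (R:ℤ) + 1 + Rg ≤ j → G zn j = p (j - (n:ℤ) - 1) := by
        intro j hj
        have h1 : G zn j = G (shiftPow (-(n:ℤ)-1) v) j := by
          apply hRg zn hznX _ (hshift _ v hvX)
          intro k hk
          show (if k ≤ (R:ℤ) then v k else v (k - (n:ℤ) - 1)) = v (k + (-(n:ℤ)-1))
          rw [if_neg (by omega), show k - (n:ℤ) - 1 = k + (-(n:ℤ)-1) by ring]
        rw [h1, hGpow _ v hvX, hGv]
        show p (j + (-(n:ℤ)-1)) = _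
        congr 1; ring
      -- extract the forbidden word 0 1^n 0
      have hw0 : G zn 0 = false := by rw [hGleft 0 (by omega), hp0]
      have hw2 : G zn ((n:ℤ)+1) = false := by
        rw [hGright _ (by omega), show (n:ℤ)+1 - n - 1 = 0 by ring, hp0]
      have hwmid : ∀ k : ℕ, k < n → G zn (1 + k) = true := by
        intro k hk
        by_cases hj : (1:ℤ) + k ≤ (n:ℤ) - R - Rg
        · rw [hGleft _ hj]; exact hpne _ (by omega)
        · rw [hGright _ (by omega)]; exact hpne _ (by omega)
      have hword : wordAt (G zn) 0 (1 + (n + 1)) =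
          false :: (List.replicate n true ++ false :: []) := by
        have hs1 : wordAt (G zn) 0 (1 + (n + 1))
            = wordAt (G zn) 0 1 ++ wordAt (G zn) (0 + (1:ℕ)) (n + 1) :=
          wordAt_append _ 0 1 (n+1)
        have hs2 : wordAt (G zn) 1 (n + 1)
            = wordAt (G zn) 1 n ++ wordAt (G zn) (1 + (n:ℕ)) 1 := wordAt_append _ 1 n 1
        have he1 : wordAt (G zn) 0 1 = [false] := by rw [wordAt_one, hw0]
        have he2 : wordAt (G zn) 1 n = List.replicate n true :=
          wordAt_replicate (fun k hk => hwmid k hk)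
        have he3 : wordAt (G zn) (1 + (n:ℕ)) 1 = [false] := by
          rw [wordAt_one, show ((1:ℤ) + (n:ℕ)) = (n:ℤ) + 1 by ring, hw2]
        rw [hs1, show ((0:ℤ) + ((1:ℕ):ℤ)) = 1 by norm_num, hs2, he1, he2, he3]
        simp
      obtain ⟨J, hJ, hocc⟩ := hGmap hznX 0 (1 + (n + 1))
      rw [hword] at hocc
      exact hnS (mem_S_of_gap_infix hJ hocc)
  have hGz1 : G z1 = z1 := by
    have := hGF z1 hz1X
    rwa [hFz1] at this
  -- tails of images
  have htailL : ∀ x ∈ SGapLeft S, ∀ j : ℤ, (R:ℤ) < j → F x j = true := by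
    intro x hx j hj
    have h1 : F x j = F z1 j := by
      apply hR x hx.1 z1 hz1X
      intro k hk
      exact hx.2.2 k (by omega)
    rw [h1, hFz1]
  have htailR : ∀ y ∈ SGapRight S, ∀ j : ℤ, j < -(R:ℤ) → F y j = true := by
    intro y hy j hj
    have h1 : F y j = F z1 j := by
      apply hR y hy.1 z1 hz1X
      intro k hk
      exact hy.2.2 k (by omega)
    rw [h1, hFz1]
  have hzeroex : ∀ x ∈ SGap S, x 0 = false → ∃ j, F x j = false := by
    intro x hx hx0
    by_contra hcon
    push_neg at hcon
    have h1 : F x = z1 := by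
      funext j
      have := hcon j
      show F x j = true
      cases hv : F x j
      · exact absurd hv (hcon j)
      · rfl
    have h2 : x = z1 := by
      have := hGF x hx
      rw [h1, hGz1] at this
      exact this.symm
    rw [h2] at hx0
    exact Bool.noConfusion hx0
  -- greatest zero for left-class points
  have hgreat : ∀ x ∈ SGapLeft S, ∃ dx : ℤ, (F x dx = false ∧ ∀ j, F x j = false → j ≤ dx)
      ∧ dx ≤ (R:ℤ) := by
    intro x hx
    have hbd : ∀ z : ℤ, F x z = false → z ≤ (R:ℤ) := by
      intro z hz
      by_contra hcz
      push_neg at hcz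
      rw [htailL x hx z hcz] at hz
      exact Bool.noConfusion hz
    obtain ⟨dx, hdx1, hdx2⟩ := Int.exists_greatest_of_bdd (P := fun j => F x j = false)
      ⟨R, hbd⟩ (hzeroex x hx.1 hx.2.1)
    exact ⟨dx, ⟨hdx1, hdx2⟩, hbd dx hdx1⟩
  -- least zero for right-class points
  have hleast : ∀ y ∈ SGapRight S, ∃ ey : ℤ, (F y ey = false ∧ ∀ j, F y j = false → ey ≤ j)
      ∧ -(R:ℤ) ≤ ey := by
    intro y hy
    have hbd : ∀ z : ℤ, F y z = false → -(R:ℤ) ≤ z := by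
      intro z hz
      by_contra hcz
      push_neg at hcz
      rw [htailR y hy z hcz] at hz
      exact Bool.noConfusion hz
    obtain ⟨ey, hey1, hey2⟩ := Int.exists_least_of_bdd (P := fun j => F y j = false)
      ⟨-(R:ℤ), hbd⟩ (hzeroex y hy.1 hy.2.1)
    exact ⟨ey, ⟨hey1, hey2⟩, hbd ey hey1⟩
  -- the least zero of F p
  obtain ⟨mp, ⟨hmp1, hmp2⟩, hmpR⟩ := hleast p hpR
  have hmpR' : mp ≤ (R:ℤ) := by
    by_contra hcz
    push_neg at hcz
    rw [htailL p hpL mp hcz] at hmp1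
    exact Bool.noConfusion hmp1
  -- Key claim (left): for any left point, the greatest zero of its image is mp
  have hkeyL : ∀ x ∈ SGapLeft S, ∀ dx : ℤ,
      (F x dx = false ∧ ∀ j, F x j = false → j ≤ dx) → dx ≤ (R:ℤ) → dx = mp := by
    intro x hx dx hdx hdxR
    have hgap : ∀ n ∈ S, 2*R+1 ≤ n → ∃ g ∈ S, (g:ℤ) = (n:ℤ) + (mp - dx) := by
      intro n hnS hn2R
      set xn : ℤ → Bool :=
        fun j => if j ≤ (n:ℤ) then x j else if j = (n:ℤ)+1 then false else true with hxndef
      have hxnX : xn ∈ SGap S := xn_mem hinf hx.1 hx.2.1 hx.2.2 hnS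
      have hagreeL : ∀ j : ℤ, j ≤ (n:ℤ) - R → F xn j = F x j := by
        intro j hj
        apply hR xn hxnX x hx.1
        intro k hk
        show (if k ≤ (n:ℤ) then x k else _) = x k
        rw [if_pos (by omega)]
      have hagreeR : ∀ j : ℤ, (R:ℤ) + 1 ≤ j → F xn j = F p (j - (n:ℤ) - 1) := by
        intro j hj
        have h1 : F xn j = F (shiftPow (-(n:ℤ)-1) p) j := by
          apply hR xn hxnX _ (hshift _ p hpX)
          intro k hk
          show (if k ≤ (n:ℤ) then x k else if k = (n:ℤ)+1 then false else true)
            = p (k + (-(n:ℤ)-1))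
          by_cases hk1 : k ≤ (n:ℤ)
          · rw [if_pos hk1, hx.2.2 k (by omega), hpne _ (by omega)]
          · rw [if_neg hk1]
            by_cases hk2 : k = (n:ℤ)+1
            · rw [if_pos hk2, show k + (-(n:ℤ)-1) = 0 by omega, hp0]
            · rw [if_neg hk2, hpne _ (by omega)]
        rw [h1, hFpow _ p hpX]
        show F p (j + (-(n:ℤ)-1)) = _
        congr 1; ring
      obtain ⟨g, hgval⟩ : ∃ g : ℕ, (g:ℤ) = (n:ℤ) + (mp - dx) :=
        ⟨((n:ℤ) + (mp - dx)).toNat, Int.toNat_of_nonneg (by omega)⟩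
      have hw0 : F xn dx = false := by rw [hagreeL dx (by omega)]; exact hdx.1
      have hw2 : F xn (dx + 1 + g) = false := by
        rw [hagreeR _ (by omega), show dx + 1 + (g:ℤ) - n - 1 = mp by omega]
        exact hmp1
      have hwmid : ∀ k : ℕ, k < g → F xn (dx + 1 + k) = true := by
        intro k hk
        by_cases hj : dx + 1 + (k:ℤ) ≤ (n:ℤ) - R
        · rw [hagreeL _ hj]
          cases hv : F x (dx + 1 + k)
          · exact absurd (hdx.2 _ hv) (by omega)
          · rfl
        · rw [hagreeR _ (by omega)]
          cases hv : F p (dx + 1 + (k:ℤ) - n - 1)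
          · exact absurd (hmp2 _ hv) (by omega)
          · rfl
      have hword : wordAt (F xn) dx (1 + (g + 1)) =
          false :: (List.replicate g true ++ false :: []) := by
        have hs1 : wordAt (F xn) dx (1 + (g + 1))
            = wordAt (F xn) dx 1 ++ wordAt (F xn) (dx + (1:ℕ)) (g + 1) :=
          wordAt_append _ dx 1 (g+1)
        have hs2 : wordAt (F xn) (dx + 1) (g + 1)
            = wordAt (F xn) (dx + 1) g ++ wordAt (F xn) (dx + 1 + (g:ℕ)) 1 :=
          wordAt_append _ _ g 1
        have he1 : wordAt (F xn) dx 1 = [false] := by rw [wordAt_one, hw0]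
        have he2 : wordAt (F xn) (dx + 1) g = List.replicate g true :=
          wordAt_replicate (fun k hk => hwmid k hk)
        have he3 : wordAt (F xn) (dx + 1 + (g:ℕ)) 1 = [false] := by
          rw [wordAt_one, hw2]
        rw [hs1, show (dx + ((1:ℕ):ℤ)) = dx + 1 by norm_num, hs2, he1, he2, he3]
        simp
      obtain ⟨J, hJ, hocc⟩ := hmap hxnX dx (1 + (g + 1))
      rw [hword] at hocc
      exact ⟨g, mem_S_of_gap_infix hJ hocc, hgval⟩
    have := shift_closure hnp (mp - dx) (2*R+1) (fun n hn hNn => hgap n hn hNn)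
    omega
  -- Key claim (right): for any right point, the least zero of its image is mp
  have hdpm : ∀ j : ℤ, F p j = false ↔ j = mp := by
    obtain ⟨dp, hdp, hdpR⟩ := hgreat p hpL
    have hdpmp : dp = mp := hkeyL p hpL dp hdp hdpR
    intro j
    constructor
    · intro hj
      have h1 := hmp2 j hj
      have h2 := hdp.2 j hj
      omega
    · intro hj
      rw [hj]; exact hmp1
  have hkeyR : ∀ y ∈ SGapRight S, ∀ ey : ℤ,
      (F y ey = false ∧ ∀ j, F y j = false → ey ≤ j) → -(R:ℤ) ≤ ey → ey = mp := by
    intro y hy ey hey heyR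
    have hgap : ∀ n ∈ S, 2*R+1 ≤ n → ∃ g ∈ S, (g:ℤ) = (n:ℤ) + (ey - mp) := by
      intro n hnS hn2R
      set yn : ℤ → Bool :=
        fun j => if 0 ≤ j then y j else if j = -(n:ℤ)-1 then false else true with hyndef
      have hynX : yn ∈ SGap S := yn_mem hinf hy.1 hy.2.1 hy.2.2 hnS
      have hagreeR : ∀ j : ℤ, -(n:ℤ) + R ≤ j → F yn j = F y j := by
        intro j hj
        apply hR yn hynX y hy.1
        intro k hk
        show (if 0 ≤ k then y k else if k = -(n:ℤ)-1 then false else true) = y k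
        by_cases hk1 : (0:ℤ) ≤ k
        · rw [if_pos hk1]
        · rw [if_neg hk1, if_neg (by omega), hy.2.2 k (by omega)]
      have hagreeL : ∀ j : ℤ, j ≤ -(R:ℤ) - 1 → F yn j = F p (j + (n:ℤ) + 1) := by
        intro j hj
        have h1 : F yn j = F (shiftPow ((n:ℤ)+1) p) j := by
          apply hR yn hynX _ (hshift _ p hpX)
          intro k hk
          show (if 0 ≤ k then y k else if k = -(n:ℤ)-1 then false else true)
            = p (k + ((n:ℤ)+1))
          rw [if_neg (by omega)]
          by_cases hk2 : k = -(n:ℤ)-1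
          · rw [if_pos hk2, show k + ((n:ℤ)+1) = 0 by omega, hp0]
          · rw [if_neg hk2, hpne _ (by omega)]
        rw [h1, hFpow _ p hpX]
        show F p (j + ((n:ℤ)+1)) = _
        congr 1; ring
      obtain ⟨g, hgval⟩ : ∃ g : ℕ, (g:ℤ) = (n:ℤ) + (ey - mp) :=
        ⟨((n:ℤ) + (ey - mp)).toNat, Int.toNat_of_nonneg (by omega)⟩
      set j0 : ℤ := mp - (n:ℤ) - 1 with hj0def
      have hw0 : F yn j0 = false := by
        rw [hagreeL _ (by omega), show j0 + (n:ℤ) + 1 = mp by omega]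
        exact hmp1
      have hw2 : F yn (j0 + 1 + g) = false := by
        rw [show j0 + 1 + (g:ℤ) = ey by omega, hagreeR _ (by omega)]
        exact hey.1
      have hwmid : ∀ k : ℕ, k < g → F yn (j0 + 1 + k) = true := by
        intro k hk
        by_cases hj : j0 + 1 + (k:ℤ) ≤ -(R:ℤ) - 1
        · rw [hagreeL _ hj]
          cases hv : F p (j0 + 1 + (k:ℤ) + n + 1)
          · exfalso
            have := (hdpm _).1 hv
            omega
          · rfl
        · rw [hagreeR _ (by omega)]
          cases hv : F y (j0 + 1 + (k:ℤ))
          · exact absurd (hey.2 _ hv) (by omega)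
          · rfl
      have hword : wordAt (F yn) j0 (1 + (g + 1)) =
          false :: (List.replicate g true ++ false :: []) := by
        have hs1 : wordAt (F yn) j0 (1 + (g + 1))
            = wordAt (F yn) j0 1 ++ wordAt (F yn) (j0 + (1:ℕ)) (g + 1) :=
          wordAt_append _ j0 1 (g+1)
        have hs2 : wordAt (F yn) (j0 + 1) (g + 1)
            = wordAt (F yn) (j0 + 1) g ++ wordAt (F yn) (j0 + 1 + (g:ℕ)) 1 :=
          wordAt_append _ _ g 1
        have he1 : wordAt (F yn) j0 1 = [false] := by rw [wordAt_one, hw0]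
        have he2 : wordAt (F yn) (j0 + 1) g = List.replicate g true :=
          wordAt_replicate (fun k hk => hwmid k hk)
        have he3 : wordAt (F yn) (j0 + 1 + (g:ℕ)) 1 = [false] := by
          rw [wordAt_one, hw2]
        rw [hs1, show (j0 + ((1:ℕ):ℤ)) = j0 + 1 by norm_num, hs2, he1, he2, he3]
        simp
      obtain ⟨J, hJ, hocc⟩ := hmap hynX j0 (1 + (g + 1))
      rw [hword] at hocc
      exact ⟨g, mem_S_of_gap_infix hJ hocc, hgval⟩
    have := shift_closure hnp (ey - mp) (2*R+1) (fun n hn hNn => hgap n hn hNn)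
    omega
  -- conclusion
  refine ⟨-mp, ?_, ?_⟩
  · rintro _ ⟨x, hx, rfl⟩
    obtain ⟨dx, hdx, hdxR⟩ := hgreat x hx
    have hdxm : dx = mp := hkeyL x hx dx hdx hdxR
    refine ⟨shiftPow mp (F x), ⟨sgap_shiftPow (hmap hx.1) mp, ?_, ?_⟩, ?_⟩
    · show F x (0 + mp) = false
      rw [zero_add, ← hdxm]
      exact hdx.1
    · intro i hi
      show F x (i + mp) = true
      cases hv : F x (i + mp)
      · exact absurd (hdx.2 _ hv) (by omega)
      · rfl
    · funext i
      show F x (i + -mp + mp) = F x i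
      congr 1; ring
  · rintro _ ⟨y, hy, rfl⟩
    obtain ⟨ey, hey, heyR⟩ := hleast y hy
    have heym : ey = mp := hkeyR y hy ey hey heyR
    refine ⟨shiftPow mp (F y), ⟨sgap_shiftPow (hmap hy.1) mp, ?_, ?_⟩, ?_⟩
    · show F y (0 + mp) = false
      rw [zero_add, ← heym]
      exact hey.1
    · intro i hi
      show F y (i + mp) = true
      cases hv : F y (i + mp)
      · exact absurd (hey.2 _ hv) (by omega)
      · rfl
    · funext i
      show F y (i + -mp + mp) = F y i
      congr 1; ring
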